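/- Parabolic lemma for CCSK: any trace is causally equivalent to a trace consisting of a (possibly empty) sequence of backward transitions followed by a (possibly empty) sequence of forward transitions, of length at most that of the original trace. -/
import Mathlib


namespace CCSK

/-- Labels: names, co-names, and the silent action τ. -/
inductive Lab : Type
  | name : ℕ → Lab
  | coname : ℕ → Lab
  | tau : Lab
deriving DecidableEq

/-- Complement of a label. -/
def Lab.co : Lab → Lab
  | .name n => .coname n
  | .coname n => .name n
  | .tau => .tau

abbrev Key := ℕ

/-- CCSK processes (with a replication operator for the extended calculus). -/
inductive Proc : Type
  | nil : Proc
  | pre : Lab → Proc → Proc          -- α.X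
  | kpre : Lab → Key → Proc → Proc   -- α[k].X
  | par : Proc → Proc → Proc
  | sum : Proc → Proc → Proc
  | res : Proc → ℕ → Proc            -- X \ a
  | repl : Proc → Proc               -- !X
deriving DecidableEq

/-- Keys occurring in a process. -/
def Proc.keys : Proc → Set Key
  | .nil => ∅
  | .pre _ X => X.keys
  | .kpre _ k X => insert k X.keys
  | .par X Y => X.keys ∪ Y.keys
  | .sum X Y => X.keys ∪ Y.keys
  | .res X _ => X.keys
  | .repl X => X.keys

/-- A process is standard when it contains no keys. -/
def Proc.std (X : Proc) : Prop := X.keys = ∅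

/-- Multiset of keyed-prefix occurrences (label, key). -/
def Proc.keyed : Proc → Multiset (Lab × Key)
  | .nil => 0
  | .pre _ X => X.keyed
  | .kpre a k X => (a, k) ::ₘ X.keyed
  | .par X Y => X.keyed + Y.keyed
  | .sum X Y => X.keyed + Y.keyed
  | .res X _ => X.keyed
  | .repl X => X.keyed

/-- Enhanced keyed labels. -/
inductive ELab : Type
  | base : Lab → Key → ELab          -- α[k]
  | parL : ELab → ELab               -- |_L θ
  | parR : ELab → ELab               -- |_R θ
  | bang : ELab → ELab               -- !θ (replication)
  | syn : ELab → ELab → ELab         -- ⟨θ_L, θ_R⟩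
deriving DecidableEq

/-- Underlying action label ℓ(θ). -/
def ELab.act : ELab → Lab
  | .base a _ => a
  | .parL θ => θ.act
  | .parR θ => θ.act
  | .bang θ => θ.act
  | .syn _ _ => .tau

/-- Key of an enhanced keyed label. -/
def ELab.key : ELab → Key
  | .base _ k => k
  | .parL θ => θ.key
  | .parR θ => θ.key
  | .bang θ => θ.key
  | .syn θ _ => θ.key

/-- Dependency relation ⋖ on enhanced keyed labels (including the extension
for replication labels). -/
inductive Dep : ELab → ELab → Prop
  | base (a : Lab) (k : Key) (θ : ELab) : Dep (.base a k) θ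
  | parL {θ θ'} : Dep θ θ' → Dep (.parL θ) (.parL θ')
  | parR {θ θ'} : Dep θ θ' → Dep (.parR θ) (.parR θ')
  | synSrcL {θL θR θ} : Dep θL θ → Dep (.syn θL θR) θ
  | synSrcR {θL θR θ} : Dep θR θ → Dep (.syn θL θR) θ
  | synTgtL {θ θL θR} : Dep θ θL → Dep θ (.syn θL θR)
  | synTgtR {θ θL θR} : Dep θ θR → Dep θ (.syn θL θR)
  | synSynL {θL θR θL' θR'} : Dep θL θL' → Dep (.syn θL θR) (.syn θL' θR')
  | synSynR {θL θR θL' θR'} : Dep θR θR' → Dep (.syn θL θR) (.syn θL' θR')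
  | bangBang (θ : ELab) : Dep (.bang θ) (.bang θ)
  | bangParL (θ θ' : ELab) : Dep (.bang θ) (.parL θ')
  | bangParRSynL (θL θR θ'' : ELab) : Dep (.bang (.syn θL θR)) (.parR (.parL θ''))
  | bangParRSynR (θL θR θ'' : ELab) : Dep (.bang (.syn θL θR)) (.parR (.parR θ''))
  | bangParR {θ θ' : ELab} : Dep θ θ' → Dep (.bang θ) (.parR θ')

/-- Concurrency of labels: no dependency in either direction. -/
def Conc (θ₁ θ₂ : ELab) : Prop := ¬ Dep θ₁ θ₂ ∧ ¬ Dep θ₂ θ₁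

/-- The proved forward LTS for CCSK (without replication rules). -/
inductive Fwd : Proc → ELab → Proc → Prop
  | act {a k X} : Proc.std X → Fwd (.pre a X) (.base a k) (.kpre a k X)
  | pre {a : Lab} {k : Key} {X X' : Proc} {θ : ELab} : Fwd X θ X' → θ.key ≠ k →
      Fwd (.kpre a k X) θ (.kpre a k X')
  | res {X X' : Proc} {θ : ELab} {a : ℕ} : Fwd X θ X' → θ.act ≠ .name a → θ.act ≠ .coname a →
      Fwd (X.res a) θ (X'.res a)
  | parL {X X' Y : Proc} {θ : ELab} : Fwd X θ X' → θ.key ∉ Y.keys →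
      Fwd (X.par Y) (.parL θ) (X'.par Y)
  | parR {Y Y' X : Proc} {θ : ELab} : Fwd Y θ Y' → θ.key ∉ X.keys →
      Fwd (X.par Y) (.parR θ) (X.par Y')
  | syn {X X' Y Y' : Proc} {θ₁ θ₂ : ELab} : Fwd X θ₁ X' → Fwd Y θ₂ Y' →
      θ₁.act ≠ .tau → θ₂.act = θ₁.act.co → θ₂.key = θ₁.key →
      Fwd (X.par Y) (.syn (.parL θ₁) (.parR θ₂)) (X'.par Y')
  | sumL {X θ X' Y} : Fwd X θ X' → Proc.std Y → Fwd (X.sum Y) θ (X'.sum Y)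
  | sumR {Y θ Y' X} : Fwd Y θ Y' → Proc.std X → Fwd (X.sum Y) θ (X.sum Y')

/-- The proved backward LTS for CCSK (exact symmetric of the forward one).
`Bwd X θ Y` means `X ⇝[θ] Y`. -/
inductive Bwd : Proc → ELab → Proc → Prop
  | act {a k X} : Proc.std X → Bwd (.kpre a k X) (.base a k) (.pre a X)
  | pre {a : Lab} {k : Key} {X' X : Proc} {θ : ELab} : Bwd X' θ X → θ.key ≠ k →
      Bwd (.kpre a k X') θ (.kpre a k X)
  | res {X' X : Proc} {θ : ELab} {a : ℕ} : Bwd X' θ X → θ.act ≠ .name a → θ.act ≠ .coname a →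
      Bwd (X'.res a) θ (X.res a)
  | parL {X' X Y : Proc} {θ : ELab} : Bwd X' θ X → θ.key ∉ Y.keys →
      Bwd (X'.par Y) (.parL θ) (X.par Y)
  | parR {Y' Y X : Proc} {θ : ELab} : Bwd Y' θ Y → θ.key ∉ X.keys →
      Bwd (X.par Y') (.parR θ) (X.par Y)
  | syn {X' X Y' Y : Proc} {θ₁ θ₂ : ELab} : Bwd X' θ₁ X → Bwd Y' θ₂ Y →
      θ₁.act ≠ .tau → θ₂.act = θ₁.act.co → θ₂.key = θ₁.key →
      Bwd (X'.par Y') (.syn (.parL θ₁) (.parR θ₂)) (X.par Y)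
  | sumL {X' θ X Y} : Bwd X' θ X → Proc.std Y → Bwd (X'.sum Y) θ (X.sum Y)
  | sumR {Y' θ Y X} : Bwd Y' θ Y → Proc.std X → Bwd (X.sum Y') θ (X.sum Y)

/-- Combined LTS: `Step true` is forward, `Step false` is backward. -/
def Step : Bool → Proc → ELab → Proc → Prop
  | true => Fwd
  | false => Bwd

/-- Reachability: connected to a standard process by forward/backward moves. -/
def Reachable (X : Proc) : Prop :=
  ∃ X₀ : Proc, X₀.std ∧
    Relation.ReflTransGen (fun A B => ∃ d θ, Step d A θ B) X₀ X

/-- The proved forward LTS for CCSK extended with replication. -/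
inductive FwdR : Proc → ELab → Proc → Prop
  | act {a k X} : Proc.std X → FwdR (.pre a X) (.base a k) (.kpre a k X)
  | pre {a : Lab} {k : Key} {X X' : Proc} {θ : ELab} : FwdR X θ X' → θ.key ≠ k →
      FwdR (.kpre a k X) θ (.kpre a k X')
  | res {X X' : Proc} {θ : ELab} {a : ℕ} : FwdR X θ X' → θ.act ≠ .name a → θ.act ≠ .coname a →
      FwdR (X.res a) θ (X'.res a)
  | parL {X X' Y : Proc} {θ : ELab} : FwdR X θ X' → θ.key ∉ Y.keys →
      FwdR (X.par Y) (.parL θ) (X'.par Y)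
  | parR {Y Y' X : Proc} {θ : ELab} : FwdR Y θ Y' → θ.key ∉ X.keys →
      FwdR (X.par Y) (.parR θ) (X.par Y')
  | syn {X X' Y Y' : Proc} {θ₁ θ₂ : ELab} : FwdR X θ₁ X' → FwdR Y θ₂ Y' →
      θ₁.act ≠ .tau → θ₂.act = θ₁.act.co → θ₂.key = θ₁.key →
      FwdR (X.par Y) (.syn (.parL θ₁) (.parR θ₂)) (X'.par Y')
  | sumL {X θ X' Y} : FwdR X θ X' → Proc.std Y → FwdR (X.sum Y) θ (X'.sum Y)
  | sumR {Y θ Y' X} : FwdR Y θ Y' → Proc.std X → FwdR (X.sum Y) θ (X.sum Y')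
  | repl1 {X X' : Proc} {θ : ELab} : FwdR X θ X' →
      FwdR (.repl X) (.bang θ) ((Proc.repl X).par X')
  | repl2 {X X' X'' : Proc} {θ₁ θ₂ : ELab} : FwdR X θ₁ X' → FwdR X θ₂ X'' →
      θ₁.act ≠ .tau → θ₂.act = θ₁.act.co → θ₂.key = θ₁.key →
      FwdR (.repl X) (.bang (.syn (.parL θ₁) (.parR θ₂)))
        ((Proc.repl X).par (X'.par X''))

/-- The proved backward LTS for CCSK extended with replication. -/
inductive BwdR : Proc → ELab → Proc → Prop
  | act {a k X} : Proc.std X → BwdR (.kpre a k X) (.base a k) (.pre a X)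
  | pre {a : Lab} {k : Key} {X' X : Proc} {θ : ELab} : BwdR X' θ X → θ.key ≠ k →
      BwdR (.kpre a k X') θ (.kpre a k X)
  | res {X' X : Proc} {θ : ELab} {a : ℕ} : BwdR X' θ X → θ.act ≠ .name a → θ.act ≠ .coname a →
      BwdR (X'.res a) θ (X.res a)
  | parL {X' X Y : Proc} {θ : ELab} : BwdR X' θ X → θ.key ∉ Y.keys →
      BwdR (X'.par Y) (.parL θ) (X.par Y)
  | parR {Y' Y X : Proc} {θ : ELab} : BwdR Y' θ Y → θ.key ∉ X.keys →
      BwdR (X.par Y') (.parR θ) (X.par Y)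
  | syn {X' X Y' Y : Proc} {θ₁ θ₂ : ELab} : BwdR X' θ₁ X → BwdR Y' θ₂ Y →
      θ₁.act ≠ .tau → θ₂.act = θ₁.act.co → θ₂.key = θ₁.key →
      BwdR (X'.par Y') (.syn (.parL θ₁) (.parR θ₂)) (X.par Y)
  | sumL {X' θ X Y} : BwdR X' θ X → Proc.std Y → BwdR (X'.sum Y) θ (X.sum Y)
  | sumR {Y' θ Y X} : BwdR Y' θ Y → Proc.std X → BwdR (X.sum Y') θ (X.sum Y)
  | repl1 {X' X : Proc} {θ : ELab} : BwdR X' θ X →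
      BwdR ((Proc.repl X).par X') (.bang θ) (.repl X)
  | repl2 {X' X'' X : Proc} {θ₁ θ₂ : ELab} : BwdR X' θ₁ X → BwdR X'' θ₂ X →
      θ₁.act ≠ .tau → θ₂.act = θ₁.act.co → θ₂.key = θ₁.key →
      BwdR ((Proc.repl X).par (X'.par X''))
        (.bang (.syn (.parL θ₁) (.parR θ₂))) (.repl X)

/-- Combined extended LTS. -/
def StepR : Bool → Proc → ELab → Proc → Prop
  | true => FwdR
  | false => BwdR

/-- Reachability in the extended calculus. -/
def ReachableR (X : Proc) : Prop :=
  ∃ X₀ : Proc, X₀.std ∧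
    Relation.ReflTransGen (fun A B => ∃ d θ, StepR d A θ B) X₀ X

/-- Traces: sequences of composable (forward or backward) transitions. -/
inductive Trace : Proc → Proc → Type
  | nil (X : Proc) : Trace X X
  | cons {X Y Z : Proc} (d : Bool) (θ : ELab) (s : Step d X θ Y)
      (T : Trace Y Z) : Trace X Z

/-- Composition of traces. -/
def Trace.comp : {X Y Z : Proc} → Trace X Y → Trace Y Z → Trace X Z
  | _, _, _, .nil _, U => U
  | _, _, _, .cons d θ s T, U => .cons d θ s (Trace.comp T U)

/-- Length of a trace. -/
def Trace.length : {X Y : Proc} → Trace X Y → ℕ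
  | _, _, .nil _ => 0
  | _, _, .cons _ _ _ T => Trace.length T + 1

/-- All transitions of a trace have direction `d`. -/
def Trace.AllDir (d : Bool) : {X Y : Proc} → Trace X Y → Prop
  | _, _, .nil _ => True
  | _, _, .cons d' _ _ T => d' = d ∧ Trace.AllDir d T

/-- Causal equivalence of traces: the least equivalence relation, closed under
composition, cancelling a transition followed by its reverse, and swapping the
two sides of a concurrency square. -/
inductive CEq : {X Y : Proc} → Trace X Y → Trace X Y → Prop
  | refl {X Y} (T : Trace X Y) : CEq T T
  | symm {X Y} {T T' : Trace X Y} : CEq T T' → CEq T' T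
  | trans {X Y} {T T' T'' : Trace X Y} : CEq T T' → CEq T' T'' → CEq T T''
  | congr {X Y Z : Proc} {d θ} (s : Step d X θ Y) {T T' : Trace Y Z} :
      CEq T T' → CEq (Trace.cons d θ s T) (Trace.cons d θ s T')
  | cancel {X Y Z : Proc} {d θ} (s : Step d X θ Y) (s' : Step (!d) Y θ X)
      (T : Trace X Z) :
      CEq (Trace.cons d θ s (Trace.cons (!d) θ s' T)) T
  | square {X X₁ X₂ Y Z : Proc} {d₁ d₂ θ₁ θ₂}
      (s₁ : Step d₁ X θ₁ X₁) (t₂ : Step d₂ X₁ θ₂ Y)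
      (s₂ : Step d₂ X θ₂ X₂) (t₁ : Step d₁ X₂ θ₁ Y)
      (hc : Conc θ₁ θ₂) (T : Trace Y Z) :
      CEq (Trace.cons d₁ θ₁ s₁ (Trace.cons d₂ θ₂ t₂ T))
          (Trace.cons d₂ θ₂ s₂ (Trace.cons d₁ θ₁ t₁ T))

/-- Removal of the keyed prefix α[k]. -/
def remP (a : Lab) (k : Key) : Proc → Proc
  | .nil => .nil
  | .pre b X => .pre b X
  | .kpre b m X => if b = a ∧ m = k then X else .kpre b m (remP a k X)
  | .par X Y => .par (remP a k X) (remP a k Y)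
  | .sum X Y => .sum (remP a k X) (remP a k Y)
  | .res X n => .res (remP a k X) n
  | .repl X => .repl (remP a k X)

/-- rem_k^α : remove α[k] and its complement (only α[k] when α = τ). -/
def remK (a : Lab) (k : Key) (X : Proc) : Proc :=
  if a = Lab.tau then remP a k X else remP a k (remP a.co k X)

/-- Left projection of enhanced keyed labels (partial). -/
def projL : ELab → Option ELab
  | .parL θ => some θ
  | .syn (.parL θL) _ => some θL
  | _ => none

/-- Right projection of enhanced keyed labels (partial). -/
def projR : ELab → Option ELab
  | .parR θ => some θ
  | .syn _ (.parR θR) => some θR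
  | _ => none

/-- Projection selector: `true` is left, `false` is right. -/
def eproj : Bool → ELab → Option ELab
  | true => projL
  | false => projR

/-- Component selector for parallel processes. -/
def side (b : Bool) (L R : Proc) : Proc := if b then L else R

/-- Labels of the shapes arising from a parallel composition. -/
def ParShape (θ : ELab) : Prop :=
  (∃ φ, θ = ELab.parL φ) ∨ (∃ φ, θ = ELab.parR φ) ∨
    ∃ φ ψ, θ = ELab.syn (ELab.parL φ) (ELab.parR ψ)

/-- The collapsing function σ identifying ! and |_R prefixes. -/
def collapse : ELab → ELab
  | .base a k => .base a k
  | .parL θ => .parL (collapse θ)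
  | .parR θ => .parR (collapse θ)
  | .bang θ => .parR (collapse θ)
  | .syn θ₁ θ₂ => .syn (collapse θ₁) (collapse θ₂)

/-- Sub-term relation: strips sums, restrictions and executed keyed prefixes.
`Strip X Y` means X is a sub-term of Y. -/
inductive Strip : Proc → Proc → Prop
  | refl (X : Proc) : Strip X X
  | sumL {X Y Z : Proc} : Strip X Y → Strip X (Y.sum Z)
  | sumR {X Y Z : Proc} : Strip X Y → Strip X (Z.sum Y)
  | res {X Y : Proc} {a : ℕ} : Strip X Y → Strip X (Y.res a)
  | kpre {X Y : Proc} {a : Lab} {k : Key} : Strip X Y → Strip X (.kpre a k Y)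

/-- A forward transition of the proved LTS, as an object. -/
structure FTrans where
  src : Proc
  lab : ELab
  tgt : Proc
  ok : Fwd src lab tgt

/-- A backward transition of the proved LTS, as an object. -/
structure BTrans where
  src : Proc
  lab : ELab
  tgt : Proc
  ok : Bwd src lab tgt

end CCSK

namespace CCSK

/-! ### Key lemmas -/

theorem fwd_keys {X X' : Proc} {θ : ELab} (h : Fwd X θ X') :
    θ.key ∉ X.keys ∧ X'.keys = insert θ.key X.keys := by
  induction h with
  | @act a k X hstd =>
      have hX : X.keys = ∅ := hstd
      simp [Proc.keys, ELab.key, hX]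
  | @pre a k X X' θ h hk ih =>
      obtain ⟨h1, h2⟩ := ih
      refine ⟨?_, by simp [Proc.keys, h2, Set.insert_comm]⟩
      simp [Proc.keys, h1, hk]
  | res h _ _ ih =>
      obtain ⟨h1, h2⟩ := ih
      exact ⟨h1, by simp [Proc.keys, h2]⟩
  | @parL X X' Y θ h hk ih =>
      obtain ⟨h1, h2⟩ := ih
      exact ⟨by simp [Proc.keys, ELab.key, h1, hk],
        by simp [Proc.keys, ELab.key, h2, Set.insert_union]⟩
  | @parR Y Y' X θ h hk ih =>
      obtain ⟨h1, h2⟩ := ih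
      exact ⟨by simp [Proc.keys, ELab.key, h1, hk],
        by simp [Proc.keys, ELab.key, h2, Set.union_insert]⟩
  | @syn X X' Y Y' θ₁ θ₂ h1 h2 hτ hco hkk ih1 ih2 =>
      obtain ⟨ha1, ha2⟩ := ih1
      obtain ⟨hb1, hb2⟩ := ih2
      constructor
      · simp only [Proc.keys, ELab.key, Set.mem_union]
        push_neg
        exact ⟨ha1, hkk ▸ hb1⟩
      · simp only [Proc.keys, ELab.key, ha2, hb2, hkk]
        ext x; simp [Set.mem_insert_iff]; tauto
  | @sumL X θ X' Y h hstd ih =>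
      obtain ⟨h1, h2⟩ := ih
      have hY : Y.keys = ∅ := hstd
      exact ⟨by simp [Proc.keys, h1, hY], by simp [Proc.keys, h2, hY, Set.insert_union]⟩
  | @sumR Y θ Y' X h hstd ih =>
      obtain ⟨h1, h2⟩ := ih
      have hX : X.keys = ∅ := hstd
      exact ⟨by simp [Proc.keys, h1, hX], by simp [Proc.keys, h2, hX, Set.union_insert]⟩

theorem bwd_keys {X' X : Proc} {θ : ELab} (h : Bwd X' θ X) :
    θ.key ∉ X.keys ∧ X'.keys = insert θ.key X.keys := by
  induction h with
  | @act a k X hstd =>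
      have hX : X.keys = ∅ := hstd
      simp [Proc.keys, ELab.key, hX]
  | @pre a k X' X θ h hk ih =>
      obtain ⟨h1, h2⟩ := ih
      refine ⟨?_, by simp [Proc.keys, h2, Set.insert_comm]⟩
      simp [Proc.keys, h1, hk]
  | res h _ _ ih =>
      obtain ⟨h1, h2⟩ := ih
      exact ⟨h1, by simp [Proc.keys, h2]⟩
  | @parL X' X Y θ h hk ih =>
      obtain ⟨h1, h2⟩ := ih
      exact ⟨by simp [Proc.keys, ELab.key, h1, hk],
        by simp [Proc.keys, ELab.key, h2, Set.insert_union]⟩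
  | @parR Y' Y X θ h hk ih =>
      obtain ⟨h1, h2⟩ := ih
      exact ⟨by simp [Proc.keys, ELab.key, h1, hk],
        by simp [Proc.keys, ELab.key, h2, Set.union_insert]⟩
  | @syn X' X Y' Y θ₁ θ₂ h1 h2 hτ hco hkk ih1 ih2 =>
      obtain ⟨ha1, ha2⟩ := ih1
      obtain ⟨hb1, hb2⟩ := ih2
      constructor
      · simp only [Proc.keys, ELab.key, Set.mem_union]
        push_neg
        exact ⟨ha1, hkk ▸ hb1⟩
      · simp only [Proc.keys, ELab.key, ha2, hb2, hkk]
        ext x; simp [Set.mem_insert_iff]; tauto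
  | @sumL X' θ X Y h hstd ih =>
      obtain ⟨h1, h2⟩ := ih
      have hY : Y.keys = ∅ := hstd
      exact ⟨by simp [Proc.keys, h1, hY], by simp [Proc.keys, h2, hY, Set.insert_union]⟩
  | @sumR Y' θ Y X h hstd ih =>
      obtain ⟨h1, h2⟩ := ih
      have hX : X.keys = ∅ := hstd
      exact ⟨by simp [Proc.keys, h1, hX], by simp [Proc.keys, h2, hX, Set.union_insert]⟩

theorem bwd_key_mem {X' X : Proc} {θ : ELab} (h : Bwd X' θ X) : θ.key ∈ X'.keys := by
  rw [(bwd_keys h).2]; exact Set.mem_insert _ _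

theorem fwd_key_mem {X X' : Proc} {θ : ELab} (h : Fwd X θ X') : θ.key ∈ X'.keys := by
  rw [(fwd_keys h).2]; exact Set.mem_insert _ _

theorem fwd_keys_mono {X X' : Proc} {θ : ELab} (h : Fwd X θ X') : X.keys ⊆ X'.keys := by
  rw [(fwd_keys h).2]; exact Set.subset_insert _ _

theorem bwd_keys_mono {X' X : Proc} {θ : ELab} (h : Bwd X' θ X) : X.keys ⊆ X'.keys := by
  rw [(bwd_keys h).2]; exact Set.subset_insert _ _

/-! ### Dependency inversion lemmas -/

theorem dep_parL_parL {a b : ELab} (h : Dep (.parL a) (.parL b)) : Dep a b := by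
  cases h; assumption

theorem dep_parR_parR {a b : ELab} (h : Dep (.parR a) (.parR b)) : Dep a b := by
  cases h; assumption

theorem dep_parL_parR {a b : ELab} (h : Dep (.parL a) (.parR b)) : False := by cases h

theorem dep_parR_parL {a b : ELab} (h : Dep (.parR a) (.parL b)) : False := by cases h

theorem dep_parL_syn {a b c : ELab} (h : Dep (.parL a) (.syn (.parL b) (.parR c))) :
    Dep a b := by
  cases h with
  | synTgtL h => exact dep_parL_parL h
  | synTgtR h => exact (dep_parL_parR h).elim

theorem dep_parR_syn {a b c : ELab} (h : Dep (.parR a) (.syn (.parL b) (.parR c))) :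
    Dep a c := by
  cases h with
  | synTgtL h => exact (dep_parR_parL h).elim
  | synTgtR h => exact dep_parR_parR h

theorem dep_syn_parL {a b c : ELab} (h : Dep (.syn (.parL a) (.parR b)) (.parL c)) :
    Dep a c := by
  cases h with
  | synSrcL h => exact dep_parL_parL h
  | synSrcR h => exact (dep_parR_parL h).elim

theorem dep_syn_parR {a b c : ELab} (h : Dep (.syn (.parL a) (.parR b)) (.parR c)) :
    Dep b c := by
  cases h with
  | synSrcL h => exact (dep_parL_parR h).elim
  | synSrcR h => exact dep_parR_parR h

theorem dep_syn_syn {a b c d : ELab}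
    (h : Dep (.syn (.parL a) (.parR b)) (.syn (.parL c) (.parR d))) :
    Dep a c ∨ Dep b d := by
  cases h with
  | synSrcL h => exact .inl (dep_parL_syn h)
  | synSrcR h => exact .inr (dep_parR_syn h)
  | synTgtL h => exact .inl (dep_syn_parL h)
  | synTgtR h => exact .inr (dep_syn_parR h)
  | synSynL h => exact .inl (dep_parL_parL h)
  | synSynR h => exact .inr (dep_parR_parR h)

/-! ### Concurrency lemmas -/

theorem conc_parL {a b : ELab} (h : Conc a b) : Conc (.parL a) (.parL b) :=
  ⟨fun hd => h.1 (dep_parL_parL hd), fun hd => h.2 (dep_parL_parL hd)⟩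

theorem conc_parR {a b : ELab} (h : Conc a b) : Conc (.parR a) (.parR b) :=
  ⟨fun hd => h.1 (dep_parR_parR hd), fun hd => h.2 (dep_parR_parR hd)⟩

theorem conc_parL_parR (a b : ELab) : Conc (.parL a) (.parR b) :=
  ⟨fun hd => dep_parL_parR hd, fun hd => dep_parR_parL hd⟩

theorem conc_parR_parL (a b : ELab) : Conc (.parR a) (.parL b) :=
  ⟨fun hd => dep_parR_parL hd, fun hd => dep_parL_parR hd⟩

theorem conc_parL_syn {a b : ELab} (c : ELab) (h : Conc a b) :
    Conc (.parL a) (.syn (.parL b) (.parR c)) :=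
  ⟨fun hd => h.1 (dep_parL_syn hd), fun hd => h.2 (dep_syn_parL hd)⟩

theorem conc_parR_syn {a c : ELab} (b : ELab) (h : Conc a c) :
    Conc (.parR a) (.syn (.parL b) (.parR c)) :=
  ⟨fun hd => h.1 (dep_parR_syn hd), fun hd => h.2 (dep_syn_parR hd)⟩

theorem conc_syn_parL {a c : ELab} (b : ELab) (h : Conc a c) :
    Conc (.syn (.parL a) (.parR b)) (.parL c) :=
  ⟨fun hd => h.1 (dep_syn_parL hd), fun hd => h.2 (dep_parL_syn hd)⟩

theorem conc_syn_parR {b c : ELab} (a : ELab) (h : Conc b c) :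
    Conc (.syn (.parL a) (.parR b)) (.parR c) :=
  ⟨fun hd => h.1 (dep_syn_parR hd), fun hd => h.2 (dep_parR_syn hd)⟩

theorem conc_syn_syn {a b c d : ELab} (h1 : Conc a c) (h2 : Conc b d) :
    Conc (.syn (.parL a) (.parR b)) (.syn (.parL c) (.parR d)) :=
  ⟨fun hd => (dep_syn_syn hd).elim h1.1 h2.1,
   fun hd => (dep_syn_syn hd).elim h1.2 h2.2⟩

/-! ### The square lemma -/

theorem sq {X Y : Proc} {θ₁ : ELab} (hf : Fwd X θ₁ Y) :
    ∀ {θ₂ : ELab} {Z : Proc}, Bwd Y θ₂ Z →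
      (θ₁ = θ₂ ∧ X = Z) ∨ (Conc θ₁ θ₂ ∧ ∃ W, Bwd X θ₂ W ∧ Fwd W θ₁ Z) := by
  induction hf with
  | @act a k X hstd =>
      intro θ₂ Z hb
      cases hb with
      | act _ => exact .inl ⟨rfl, rfl⟩
      | pre h hk =>
          have := bwd_key_mem h
          rw [show X.keys = ∅ from hstd] at this
          exact this.elim
  | @pre a k X X' θ h hk ih =>
      intro θ₂ Z hb
      cases hb with
      | act hstd =>
          have := fwd_key_mem h
          rw [show X'.keys = ∅ from hstd] at this
          exact this.elim
      | pre h2 hk2 =>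
          rcases ih h2 with ⟨hθ, hX⟩ | ⟨hc, W, hbW, hfW⟩
          · exact .inl ⟨hθ, by rw [hX]⟩
          · exact .inr ⟨hc, _, .pre hbW hk2, .pre hfW hk⟩
  | @res X X' θ a h hn hcn ih =>
      intro θ₂ Z hb
      cases hb with
      | res h2 hn2 hcn2 =>
          rcases ih h2 with ⟨hθ, hX⟩ | ⟨hc, W, hbW, hfW⟩
          · exact .inl ⟨hθ, by rw [hX]⟩
          · exact .inr ⟨hc, _, .res hbW hn2 hcn2, .res hfW hn hcn⟩
  | @parL P P' Q θ h hkey ih =>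
      intro θ₂ Z hb
      cases hb with
      | parL h2 hk2 =>
          rcases ih h2 with ⟨hθ, hX⟩ | ⟨hc, W, hbW, hfW⟩
          · exact .inl ⟨by rw [hθ], by rw [hX]⟩
          · exact .inr ⟨conc_parL hc, _, .parL hbW hk2, .parL hfW hkey⟩
      | parR h2 hk2 =>
          refine .inr ⟨conc_parL_parR _ _, _,
            .parR h2 (fun hm => hk2 (fwd_keys_mono h hm)), .parL h (fun hm => ?_)⟩
          exact hkey (bwd_keys_mono h2 hm)
      | @syn _ P2 _ Q2 ψ₁ ψ₂ h2 h3 hτ hco hkk =>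
          rcases ih h2 with ⟨hθ, hX⟩ | ⟨hc, W, hbW, hfW⟩
          · exfalso
            have hm := bwd_key_mem h3
            rw [hkk, ← hθ] at hm
            exact hkey hm
          · exact .inr ⟨conc_parL_syn _ hc, _, .syn hbW h3 hτ hco hkk,
              .parL hfW (fun hm => hkey (bwd_keys_mono h3 hm))⟩
  | @parR Q Q' P θ h hkey ih =>
      intro θ₂ Z hb
      cases hb with
      | parR h2 hk2 =>
          rcases ih h2 with ⟨hθ, hX⟩ | ⟨hc, W, hbW, hfW⟩
          · exact .inl ⟨by rw [hθ], by rw [hX]⟩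
          · exact .inr ⟨conc_parR hc, _, .parR hbW hk2, .parR hfW hkey⟩
      | parL h2 hk2 =>
          exact .inr ⟨conc_parR_parL _ _, _,
            .parL h2 (fun hm => hk2 (fwd_keys_mono h hm)),
            .parR h (fun hm => hkey (bwd_keys_mono h2 hm))⟩
      | @syn _ P2 _ Q2 ψ₁ ψ₂ h2 h3 hτ hco hkk =>
          rcases ih h3 with ⟨hθ, hX⟩ | ⟨hc, W, hbW, hfW⟩
          · exfalso
            have hm := bwd_key_mem h2
            rw [hθ, hkk] at hkey
            exact hkey hm
          · exact .inr ⟨conc_parR_syn _ hc, _, .syn h2 hbW hτ hco hkk,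
              .parR hfW (fun hm => hkey (bwd_keys_mono h2 hm))⟩
  | @syn P P' Q Q' φ₁ φ₂ h1 h2 hτ hco hkk ih1 ih2 =>
      intro θ₂ Z hb
      cases hb with
      | parL hb1 hk =>
          rcases ih1 hb1 with ⟨hθ, hX⟩ | ⟨hc, W, hbW, hfW⟩
          · exfalso
            have hm := fwd_key_mem h2
            rw [hkk] at hm
            exact hk (hθ ▸ hm)
          · exact .inr ⟨conc_syn_parL _ hc, _,
              .parL hbW (fun hm => hk (fwd_keys_mono h2 hm)),
              .syn hfW h2 hτ hco hkk⟩
      | parR hb2 hk =>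
          rcases ih2 hb2 with ⟨hθ, hX⟩ | ⟨hc, W, hbW, hfW⟩
          · exfalso
            have hm := fwd_key_mem h1
            rw [← hkk] at hm
            exact hk (hθ ▸ hm)
          · exact .inr ⟨conc_syn_parR _ hc, _,
              .parR hbW (fun hm => hk (fwd_keys_mono h1 hm)),
              .syn h1 hfW hτ hco hkk⟩
      | @syn _ P2 _ Q2 ψ₁ ψ₂ hb1 hb2 hτ' hco' hkk' =>
          rcases ih1 hb1 with ⟨hθ1, hX1⟩ | ⟨hc1, W1, hbW1, hfW1⟩
          · rcases ih2 hb2 with ⟨hθ2, hX2⟩ | ⟨hc2, W2, hbW2, hfW2⟩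
            · exact .inl ⟨by rw [hθ1, hθ2], by rw [hX1, hX2]⟩
            · exfalso
              have hm := bwd_key_mem hbW2
              rw [hkk', ← hθ1, ← hkk] at hm
              exact (fwd_keys h2).1 hm
          · rcases ih2 hb2 with ⟨hθ2, hX2⟩ | ⟨hc2, W2, hbW2, hfW2⟩
            · exfalso
              have hm := bwd_key_mem hbW1
              rw [← hkk', ← hθ2, hkk] at hm
              exact (fwd_keys h1).1 hm
            · exact .inr ⟨conc_syn_syn hc1 hc2, _,
                .syn hbW1 hbW2 hτ' hco' hkk', .syn hfW1 hfW2 hτ hco hkk⟩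
  | @sumL P θ P' Q h hstd ih =>
      intro θ₂ Z hb
      cases hb with
      | sumL h2 _ =>
          rcases ih h2 with ⟨hθ, hX⟩ | ⟨hc, W, hbW, hfW⟩
          · exact .inl ⟨hθ, by rw [hX]⟩
          · exact .inr ⟨hc, _, .sumL hbW hstd, .sumL hfW hstd⟩
      | sumR h2 hstd2 =>
          have := fwd_key_mem h
          rw [show P'.keys = ∅ from hstd2] at this
          exact this.elim
  | @sumR Q θ Q' P h hstd ih =>
      intro θ₂ Z hb
      cases hb with
      | sumR h2 _ =>
          rcases ih h2 with ⟨hθ, hX⟩ | ⟨hc, W, hbW, hfW⟩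
          · exact .inl ⟨hθ, by rw [hX]⟩
          · exact .inr ⟨hc, _, .sumR hbW hstd, .sumR hfW hstd⟩
      | sumL h2 hstd2 =>
          have := fwd_key_mem h
          rw [show Q'.keys = ∅ from hstd2] at this
          exact this.elim

/-! ### Trace lemmas -/

theorem Trace.comp_nil : ∀ {X Y : Proc} (T : Trace X Y), T.comp (.nil Y) = T
  | _, _, .nil _ => rfl
  | _, _, .cons d θ s T => by rw [Trace.comp, Trace.comp_nil T]

theorem Trace.comp_assoc : ∀ {X Y Z W : Proc} (T : Trace X Y) (U : Trace Y Z)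
    (V : Trace Z W), (T.comp U).comp V = T.comp (U.comp V)
  | _, _, _, _, .nil _, _, _ => rfl
  | _, _, _, _, .cons d θ s T, U, V => by
      rw [Trace.comp, Trace.comp, Trace.comp, Trace.comp_assoc T U V]

theorem Trace.length_comp : ∀ {X Y Z : Proc} (T : Trace X Y) (U : Trace Y Z),
    (T.comp U).length = T.length + U.length
  | _, _, _, .nil _, U => by simp [Trace.comp, Trace.length]
  | _, _, _, .cons d θ s T, U => by
      rw [Trace.comp, Trace.length, Trace.length, Trace.length_comp T U]; omega

theorem Trace.allDir_comp {d : Bool} : ∀ {X Y Z : Proc} {T : Trace X Y} {U : Trace Y Z},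
    T.AllDir d → U.AllDir d → (T.comp U).AllDir d
  | _, _, _, .nil _, U, _, hU => hU
  | _, _, _, .cons d' θ s T, U, hT, hU =>
      ⟨hT.1, Trace.allDir_comp hT.2 hU⟩

theorem ceq_comp_right {X Y : Proc} {T T' : Trace X Y} (h : CEq T T') :
    ∀ {Z : Proc} (U : Trace Y Z), CEq (T.comp U) (T'.comp U) := by
  induction h with
  | refl T => intro Z U; exact .refl _
  | symm _ ih => intro Z U; exact .symm (ih U)
  | trans _ _ ih1 ih2 => intro Z U; exact .trans (ih1 U) (ih2 U)
  | congr s _ ih => intro Z U; exact .congr s (ih U)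
  | cancel s s' T => intro Z U; exact .cancel s s' (T.comp U)
  | square s₁ t₂ s₂ t₁ hc T => intro Z U; exact .square s₁ t₂ s₂ t₁ hc (T.comp U)

/-! ### The push lemma -/

theorem push : ∀ {X₁ Z : Proc} (B : Trace X₁ Z), B.AllDir false →
    ∀ {X : Proc} {θ : ELab} (s : Fwd X θ X₁),
    ∃ (Z' : Proc) (B' : Trace X Z') (F' : Trace Z' Z),
      B'.AllDir false ∧ F'.AllDir true ∧
      CEq (Trace.cons true θ s B) (B'.comp F') ∧
      B'.length + F'.length ≤ B.length + 1 := by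
  intro X₁ Z B
  induction B with
  | nil W =>
      intro _ X θ s
      exact ⟨X, .nil X, .cons true θ s (.nil W), trivial, ⟨rfl, trivial⟩,
        .refl _, by simp [Trace.length]⟩
  | @cons X₁ X₂ Z d ψ t B₀ ih =>
      intro hAll X θ s
      obtain ⟨hd, hAll₀⟩ := hAll
      subst hd
      rcases sq s t with ⟨hθ, hX⟩ | ⟨hc, W, hbW, hfW⟩
      · subst hθ
        subst hX
        refine ⟨Z, B₀, .nil Z, hAll₀, trivial, ?_, by simp [Trace.length]; omega⟩
        rw [Trace.comp_nil]
        exact CEq.cancel (d := true) s t B₀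
      · obtain ⟨Z', B'', F'', h1, h2, h3, h4⟩ := ih hAll₀ hfW
        refine ⟨Z', .cons false ψ hbW B'', F'', ⟨rfl, h1⟩, h2, ?_, ?_⟩
        · exact CEq.trans (CEq.square (d₁ := true) (d₂ := false) s t hbW hfW hc B₀) (CEq.congr (d := false) hbW h3)
        · simp only [Trace.length] at h4 ⊢; omega

end CCSK

open CCSK in
/-- Parabolic lemma: any trace is causally equivalent to a backward-only trace
followed by a forward-only trace, of length at most that of the original. -/
theorem parabolic_lemma : ∀ (X Y : Proc), Reachable X → ∀ T : Trace X Y,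
    ∃ (Z : Proc) (B : Trace X Z) (F : Trace Z Y),
      B.AllDir false ∧ F.AllDir true ∧ CEq T (B.comp F) ∧
      B.length + F.length ≤ T.length := by
  intro X Y hR T
  clear hR
  induction T with
  | nil X => exact ⟨X, .nil X, .nil X, trivial, trivial, .refl _, le_refl _⟩
  | @cons X X₁ Y d θ s T' ih =>
      obtain ⟨Z, B, F, hB, hF, hc, hl⟩ := ih
      cases d with
      | false =>
          refine ⟨Z, .cons false θ s B, F, ⟨rfl, hB⟩, hF, .congr s hc, ?_⟩
          simp only [Trace.length]; omega
      | true =>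
          obtain ⟨Z'', B'', F'', h1, h2, h3, h4⟩ := push B hB s
          refine ⟨Z'', B'', F''.comp F, h1, Trace.allDir_comp h2 hF, ?_, ?_⟩
          · have h5 := ceq_comp_right h3 F
            rw [Trace.comp_assoc] at h5
            exact .trans (.congr s hc) h5
          · rw [Trace.length_comp]
            simp only [Trace.length] at *
            omega
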